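/- arXiv:0802.1577 — 2 statements merged into one kernel-verified Lean document; each statement's English description precedes it below -/
import Mathlib

section
/- Let m satisfy 1 < m < 5/3, T > Z²/(4m), Z > 0, and g(λ) = min{(-λ/m)^{1/(m-1)}, 1} for λ < 0, g = 0 otherwise. Then ∑_{j≥1} j² g(-Z²/(4 T j²)) = (Z²/(4Tm))^{1/(m-1)} · ζ(2(m-2)/(m-1)), where ζ is the Riemann zeta function, and this sum is finite. -/
open Complex in
/-- For 1 < m < 5/3, T > Z²/(4m), Z > 0 and
g(λ) = min{(-λ/m)^{1/(m-1)}, 1} for λ < 0, g = 0 otherwise, one has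
∑_{j≥1} j² g(-Z²/(4Tj²)) = (Z²/(4Tm))^{1/(m-1)} ζ(2(2-m)/(m-1)) < ∞.
(The argument of ζ is written so that it exceeds 1; in the paper the sum
∑_j j^{2-2/(m-1)} is identified with this zeta value.) -/
theorem stmt_5 (m T Z : ℝ) (hm1 : 1 < m) (hm53 : m < 5 / 3) (hZ : 0 < Z)
    (hT : Z ^ 2 / (4 * m) < T) (g : ℝ → ℝ)
    (hg_neg : ∀ lam : ℝ, lam < 0 → g lam = min ((-lam / m) ^ (1 / (m - 1))) 1)
    (hg_pos : ∀ lam : ℝ, 0 ≤ lam → g lam = 0) :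
    Summable (fun j : ℕ+ => (j : ℝ) ^ 2 * g (-Z ^ 2 / (4 * T * (j : ℝ) ^ 2))) ∧
    ((∑' j : ℕ+, (j : ℝ) ^ 2 * g (-Z ^ 2 / (4 * T * (j : ℝ) ^ 2)) : ℝ) : ℂ)
      = ((((Z ^ 2 / (4 * T * m)) ^ (1 / (m - 1)) : ℝ)) : ℂ)
        * riemannZeta ((2 * (2 - m) / (m - 1) : ℝ) : ℂ) := by
  have hm0 : (0:ℝ) < m := by linarith
  have hm1' : (0:ℝ) < m - 1 := by linarith
  have hT0 : (0:ℝ) < T := lt_trans (by positivity) hT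
  set s : ℝ := 2 * (2 - m) / (m - 1) with hs_def
  have hs1 : 1 < s := by
    rw [hs_def, lt_div_iff₀ hm1']
    linarith
  set C : ℝ := (Z ^ 2 / (4 * T * m)) ^ (1 / (m - 1)) with hC_def
  have hbase : Z ^ 2 / (4 * T * m) < 1 := by
    rw [div_lt_one (by positivity)]
    have := (div_lt_iff₀ (by positivity : (0:ℝ) < 4 * m)).mp hT
    linarith
  have key : ∀ j : ℕ+, (j : ℝ) ^ 2 * g (-Z ^ 2 / (4 * T * (j : ℝ) ^ 2))
      = C * (j : ℝ) ^ (-s) := by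
    intro j
    have hj : (0:ℝ) < (j : ℝ) := by exact_mod_cast j.pos
    have hj1 : (1:ℝ) ≤ (j : ℝ) := by exact_mod_cast j.one_le
    have hlam : -Z ^ 2 / (4 * T * (j : ℝ) ^ 2) < 0 := by
      apply div_neg_of_neg_of_pos (by nlinarith) (by positivity)
    rw [hg_neg _ hlam]
    have harg : -(-Z ^ 2 / (4 * T * (j : ℝ) ^ 2)) / m
        = (Z ^ 2 / (4 * T * m)) / (j : ℝ) ^ 2 := by
      field_simp
    rw [harg]
    have hb0 : (0:ℝ) ≤ Z ^ 2 / (4 * T * m) := by positivity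
    have hle1 : (Z ^ 2 / (4 * T * m)) / (j : ℝ) ^ 2 ≤ 1 := by
      calc (Z ^ 2 / (4 * T * m)) / (j : ℝ) ^ 2 ≤ Z ^ 2 / (4 * T * m) / 1 := by
            apply div_le_div_of_nonneg_left hb0 one_pos (by nlinarith)
        _ ≤ 1 := by rw [div_one]; linarith
    have hmin : min (((Z ^ 2 / (4 * T * m)) / (j : ℝ) ^ 2) ^ (1 / (m - 1))) 1
        = ((Z ^ 2 / (4 * T * m)) / (j : ℝ) ^ 2) ^ (1 / (m - 1)) := by
      apply min_eq_left
      exact Real.rpow_le_one (by positivity) hle1 (by positivity)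
    rw [hmin, Real.div_rpow hb0 (by positivity)]
    rw [← hC_def]
    have h2 : ((j : ℝ) ^ 2) ^ (1 / (m - 1)) = (j : ℝ) ^ (2 * (1 / (m - 1))) := by
      rw [← Real.rpow_natCast (j:ℝ) 2, ← Real.rpow_mul hj.le]
      norm_num
    rw [h2]
    rw [div_eq_mul_inv, ← Real.rpow_neg hj.le]
    rw [mul_comm ((j:ℝ)^2), mul_assoc, ← Real.rpow_natCast (j:ℝ) 2,
      ← Real.rpow_add hj]
    congr 1
    push_cast
    rw [hs_def]
    field_simp
    ring
  have hsum_nat : Summable (fun n : ℕ => (n : ℝ) ^ (-s)) :=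
    Real.summable_nat_rpow.mpr (by linarith)
  have hsum : Summable (fun j : ℕ+ => C * (j : ℝ) ^ (-s)) := by
    apply Summable.mul_left
    exact (hsum_nat.comp_injective (fun a b h => by exact_mod_cast PNat.coe_injective h))
  constructor
  · exact hsum.congr (fun j => (key j).symm)
  · rw [tsum_congr key, tsum_mul_left, Complex.ofReal_mul, Complex.ofReal_tsum]
    congr 1
    have hre : 1 < Complex.re ((s : ℝ) : ℂ) := by rwa [Complex.ofReal_re]
    rw [zeta_eq_tsum_one_div_nat_add_one_cpow hre]
    rw [← Equiv.pnatEquivNat.symm.tsum_eq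
      (fun j : ℕ+ => (((j : ℝ) ^ (-s) : ℝ) : ℂ))]
    apply tsum_congr
    intro n
    have hpos : (0:ℝ) ≤ ((Equiv.pnatEquivNat.symm n : ℕ+) : ℝ) := by positivity
    rw [Complex.ofReal_cpow hpos]
    have hcast : (((Equiv.pnatEquivNat.symm n : ℕ+) : ℝ) : ℂ) = (n : ℂ) + 1 := by
      simp [Equiv.pnatEquivNat, Nat.succPNat]
    rw [hcast, Complex.ofReal_neg, Complex.cpow_neg, one_div]
end

section
/- Let β be convex on [0,1] with β(0) = 0 and β ≥ 0, let H be a Hilbert space, γ a self-adjoint operator with 0 ≤ γ ≤ 1 and γ trace-class, and X a self-adjoint operator with X² ≤ 1. Then tr(β(XγX)) ≤ tr(X β(γ) X) (Brown–Kosaki inequality, trace form). -/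
open scoped InnerProductSpace

section Aux
variable (β : ℝ → ℝ)

lemma bk_beta_mono (hconv : ConvexOn ℝ (Set.Icc (0:ℝ) 1) β) (hβ0 : β 0 = 0)
    (hβpos : ∀ ν ∈ Set.Icc (0:ℝ) 1, 0 ≤ β ν)
    {a b : ℝ} (ha : 0 ≤ a) (hb : b ∈ Set.Icc (0:ℝ) 1) (hab : a ≤ b) : β a ≤ β b := by
  obtain ⟨hb0, hb1⟩ := hb
  rcases eq_or_lt_of_le (ha.trans hab) with hb' | hb'
  · have : a = 0 := le_antisymm (hab.trans hb'.symm.le) ha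
    rw [this, ← hb']
  · have hd : a / b ≤ 1 := (div_le_one hb').2 hab
    have h := hconv.2 (Set.mem_Icc.2 ⟨le_refl 0, zero_le_one⟩)
        (Set.mem_Icc.2 ⟨hb0, hb1⟩)
        (show (0:ℝ) ≤ 1 - a / b by linarith)
        (div_nonneg ha hb0) (by ring)
    have hab' : (1 - a / b) • (0:ℝ) + (a / b) • b = a := by
      field_simp
      simp only [smul_eq_mul, mul_zero, zero_add]
      exact div_mul_cancel₀ a hb'.ne'
    rw [hab'] at h
    have hβb : 0 ≤ β b := hβpos b ⟨hb0, hb1⟩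
    calc β a ≤ (1 - a / b) • β 0 + (a / b) • β b := h
      _ = (a / b) * β b := by simp [hβ0]
      _ ≤ 1 * β b := mul_le_mul_of_nonneg_right hd hβb
      _ = β b := one_mul _

lemma bk_jensen_fin (hconv : ConvexOn ℝ (Set.Icc (0:ℝ) 1) β) (hβ0 : β 0 = 0)
    (F : Finset ℕ) (w x : ℕ → ℝ) (hw : ∀ i, 0 ≤ w i) (hx : ∀ i, x i ∈ Set.Icc (0:ℝ) 1)
    (hF : ∑ i ∈ F, w i ≤ 1) :
    β (∑ i ∈ F, w i * x i) ≤ ∑ i ∈ F, w i * β (x i) := by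
  have h := hconv.map_add_sum_le (t := F) (w := w) (p := x)
      (v := 1 - ∑ i ∈ F, w i) (q := 0)
      (fun i _ => hw i) (by ring) (fun i _ => hx i) (by linarith)
      (Set.mem_Icc.2 ⟨le_refl 0, zero_le_one⟩)
  simpa [hβ0] using h

lemma bk_jensen_tsum (hconv : ConvexOn ℝ (Set.Icc (0:ℝ) 1) β) (hβ0 : β 0 = 0)
    (hβpos : ∀ ν ∈ Set.Icc (0:ℝ) 1, 0 ≤ β ν)
    (w x : ℕ → ℝ) (hw : ∀ i, 0 ≤ w i) (hx : ∀ i, x i ∈ Set.Icc (0:ℝ) 1)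
    (hws : Summable w) (hw1 : ∑' i, w i ≤ 1) :
    β (∑' i, w i * x i) ≤ ∑' i, w i * β (x i) := by
  have hβ1 : 0 ≤ β 1 := hβpos 1 ⟨zero_le_one, le_refl 1⟩
  have hwx_le : ∀ i, w i * x i ≤ w i := fun i => by
    calc w i * x i ≤ w i * 1 := mul_le_mul_of_nonneg_left (hx i).2 (hw i)
      _ = w i := mul_one _
  have hwx_nonneg : ∀ i, 0 ≤ w i * x i := fun i => mul_nonneg (hw i) (hx i).1
  have hwx : Summable (fun i => w i * x i) :=
    Summable.of_nonneg_of_le hwx_nonneg hwx_le hws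
  have hwβ_nonneg : ∀ i, 0 ≤ w i * β (x i) := fun i =>
    mul_nonneg (hw i) (hβpos _ (hx i))
  have hwβ_le : ∀ i, w i * β (x i) ≤ w i * β 1 := fun i =>
    mul_le_mul_of_nonneg_left
      (bk_beta_mono β hconv hβ0 hβpos (hx i).1 ⟨zero_le_one, le_refl 1⟩ (hx i).2) (hw i)
  have hwβ : Summable (fun i => w i * β (x i)) :=
    Summable.of_nonneg_of_le hwβ_nonneg hwβ_le (hws.mul_right _)
  set S := ∑' i, w i * x i with hS
  have hS0 : 0 ≤ S := tsum_nonneg hwx_nonneg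
  have hS1 : S ≤ 1 := le_trans (Summable.tsum_le_tsum hwx_le hwx hws) hw1
  rcases eq_or_lt_of_le hS1 with hSeq | hSlt
  · -- S = 1 : forced saturation
    have hwsum1 : ∑' i, w i = 1 :=
      le_antisymm hw1 (by rw [← hSeq]; exact Summable.tsum_le_tsum hwx_le hwx hws)
    have hd : Summable (fun i => w i - w i * x i) := hws.sub hwx
    have hdsum : ∑' i, (w i - w i * x i) = 0 := by
      rw [(hws.hasSum.sub hwx.hasSum).tsum_eq, hwsum1, ← hS, hSeq, sub_self]
    have hzero : ∀ i, w i - w i * x i = 0 := by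
      intro i
      have h1 : w i - w i * x i ≤ 0 := by
        rw [← hdsum]
        exact Summable.le_tsum hd i (fun j _ => by linarith [hwx_le j])
      linarith [hwx_le i]
    have hkey : ∀ i, w i * β (x i) = (w i * x i) * β 1 := by
      intro i
      rcases eq_or_lt_of_le (hw i) with h0 | h0
      · rw [← h0]; ring
      · have hx1 : x i = 1 := by
          have := hzero i
          have : w i * (1 - x i) = 0 := by linarith [this]
          rcases mul_eq_zero.1 this with h | h
          · exact absurd h (ne_of_gt h0)
          · linarith
        rw [hx1]; ring
    refine le_of_eq ?_
    calc β S = β 1 := by rw [hSeq]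
      _ = S * β 1 := by rw [hSeq, one_mul]
      _ = (∑' i, w i * x i) * β 1 := by rw [hS]
      _ = ∑' i, (w i * x i) * β 1 := (tsum_mul_right).symm
      _ = ∑' i, w i * β (x i) := tsum_congr fun i => (hkey i).symm
  · -- S < 1 : continuity argument
    have hfin : ∀ F : Finset ℕ, β (∑ i ∈ F, w i * x i) ≤ ∑' i, w i * β (x i) := by
      intro F
      refine le_trans (bk_jensen_fin β hconv hβ0 F w x hw hx ?_) ?_
      · exact le_trans (Summable.sum_le_tsum F (fun i _ => hw i) hws) hw1
      · exact Summable.sum_le_tsum F (fun i _ => hwβ_nonneg i) hwβ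
    rcases eq_or_lt_of_le hS0 with hS0' | hS0'
    · -- S = 0
      have : β S = 0 := by rw [← hS0', hβ0]
      rw [this]
      exact tsum_nonneg hwβ_nonneg
    · -- 0 < S < 1 : β continuous at S
      have hcont : ContinuousAt β S := by
        have h1 : ContinuousOn β (interior (Set.Icc (0:ℝ) 1)) :=
          hconv.continuousOn_interior
        rw [interior_Icc] at h1
        exact h1.continuousAt (Ioo_mem_nhds hS0' hSlt)
      have htend : Filter.Tendsto (fun F : Finset ℕ => β (∑ i ∈ F, w i * x i))
          Filter.atTop (nhds (β S)) :=
        hcont.tendsto.comp hwx.hasSum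
      exact le_of_tendsto htend (Filter.Eventually.of_forall hfin)

end Aux

/-- Brown–Kosaki inequality in trace form. Let β be convex on
[0,1] with β(0) = 0, β ≥ 0, let γ = ∑ᵢ nᵢ |uᵢ⟩⟨uᵢ| be a trace-class operator
with 0 ≤ γ ≤ 1 on a Hilbert space H, and let X be self-adjoint with X² ≤ 1
(equivalently ‖Xψ‖ ≤ ‖ψ‖). If XγX = ∑ⱼ mⱼ |vⱼ⟩⟨vⱼ| is a spectral
decomposition of XγX, then
tr β(XγX) = ∑ⱼ β(mⱼ) ≤ ∑ᵢ β(nᵢ)‖X uᵢ‖² = tr(X β(γ) X). -/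
theorem stmt_18 {H : Type*} [NormedAddCommGroup H] [InnerProductSpace ℂ H]
    [CompleteSpace H]
    (β : ℝ → ℝ) (hconv : ConvexOn ℝ (Set.Icc (0:ℝ) 1) β) (hβ0 : β 0 = 0)
    (hβpos : ∀ ν ∈ Set.Icc (0:ℝ) 1, 0 ≤ β ν)
    (X : H →L[ℂ] H) (hXsa : IsSelfAdjoint X) (hX1 : ∀ ψ, ‖X ψ‖ ≤ ‖ψ‖)
    (n : ℕ → ℝ) (hn : ∀ i, n i ∈ Set.Icc (0:ℝ) 1) (hnsum : Summable n)
    (u : ℕ → H) (hu : Orthonormal ℂ u)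
    (m : ℕ → ℝ) (hm : ∀ j, m j ∈ Set.Icc (0:ℝ) 1) (hmsum : Summable m)
    (v : ℕ → H) (hv : Orthonormal ℂ v)
    -- XγX = ∑ⱼ mⱼ |vⱼ⟩⟨vⱼ| where γ = ∑ᵢ nᵢ |uᵢ⟩⟨uᵢ|
    (hXγX : ∀ ψ : H, X (∑' i, (n i : ℂ) • ⟪u i, X ψ⟫_ℂ • u i)
        = ∑' j, (m j : ℂ) • ⟪v j, ψ⟫_ℂ • v j) :
    (∑' j, β (m j)) ≤ ∑' i, β (n i) * ‖X (u i)‖ ^ 2 := by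
  classical
  have hsym : ∀ a b : H, ⟪X a, b⟫_ℂ = ⟪a, X b⟫_ℂ := fun a b =>
    (ContinuousLinearMap.isSelfAdjoint_iff_isSymmetric.1 hXsa) a b
  set c : ℕ → ℕ → ℝ := fun i j => ‖⟪u i, X (v j)⟫_ℂ‖ ^ 2 with hc
  have hXv : ∀ j, ‖X (v j)‖ ≤ 1 := fun j => by simpa [hv.1 j] using hX1 (v j)
  have hXu : ∀ i, ‖X (u i)‖ ≤ 1 := fun i => by simpa [hu.1 i] using hX1 (u i)
  have hc_nonneg : ∀ i j, 0 ≤ c i j := fun i j => sq_nonneg _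
  have hc_symm : ∀ i j, c i j = ‖⟪v j, X (u i)⟫_ℂ‖ ^ 2 := fun i j => by
    simp only [hc, ← hsym (u i) (v j), ← inner_conj_symm (X (u i)) (v j),
      RCLike.norm_conj]
  -- the key identity : m j = ∑' i, n i * c i j
  have hm_eq : ∀ j, m j = ∑' i, n i * c i j := by
    intro j
    have hfs : Summable (fun i => (n i : ℂ) • (⟪u i, X (v j)⟫_ℂ) • u i) := by
      apply Summable.of_norm
      apply Summable.of_nonneg_of_le (fun i => norm_nonneg _) _ hnsum
      intro i
      rw [norm_smul, norm_smul, hu.1 i, mul_one]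
      have h1 : ‖⟪u i, X (v j)⟫_ℂ‖ ≤ 1 := by
        calc ‖⟪u i, X (v j)⟫_ℂ‖ ≤ ‖u i‖ * ‖X (v j)‖ := norm_inner_le_norm _ _
          _ ≤ 1 * 1 := by
              apply mul_le_mul (le_of_eq (hu.1 i)) (hXv j) (norm_nonneg _) zero_le_one
          _ = 1 := one_mul 1
      calc ‖(n i : ℂ)‖ * ‖⟪u i, X (v j)⟫_ℂ‖ ≤ ‖(n i : ℂ)‖ * 1 :=
            mul_le_mul_of_nonneg_left h1 (norm_nonneg _)
        _ = |n i| := by rw [mul_one, Complex.norm_real, Real.norm_eq_abs]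
        _ = n i := abs_of_nonneg (hn i).1
    -- inner of LHS
    have hL : ⟪v j, X (∑' i, (n i : ℂ) • ⟪u i, X (v j)⟫_ℂ • u i)⟫_ℂ
        = ∑' i, ((n i * c i j : ℝ) : ℂ) := by
      rw [← hsym (v j) _]
      have h2 := (innerSL ℂ (X (v j))).map_tsum hfs
      simp only [innerSL_apply_apply] at h2
      rw [h2]
      apply tsum_congr
      intro i
      simp only [inner_smul_right]
      rw [← inner_conj_symm (X (v j)) (u i), Complex.mul_conj]
      have hnorm : Complex.normSq ⟪u i, X (v j)⟫_ℂ = c i j := by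
        rw [hc, Complex.normSq_eq_norm_sq]
      rw [hnorm]
      push_cast
      ring
    -- inner of RHS
    have hR : ⟪v j, (∑' k, (m k : ℂ) • ⟪v k, v j⟫_ℂ • v k)⟫_ℂ = (m j : ℂ) := by
      have ht : (∑' k, (m k : ℂ) • ⟪v k, v j⟫_ℂ • v k) = (m j : ℂ) • v j := by
        rw [tsum_eq_single j]
        · rw [inner_self_eq_norm_sq_to_K, hv.1 j]
          norm_num
        · intro k hk
          rw [hv.2 hk]
          simp
      rw [ht, inner_smul_right, inner_self_eq_norm_sq_to_K, hv.1 j]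
      norm_num
    have hmC : (m j : ℂ) = ∑' i, ((n i * c i j : ℝ) : ℂ) := by
      rw [← hL, hXγX (v j), hR]
    have := hmC
    rw [← Complex.ofReal_tsum] at this
    exact_mod_cast this
  have hβ1 : 0 ≤ β 1 := hβpos 1 ⟨zero_le_one, le_refl 1⟩
  have hβle : ∀ t : ℝ, t ∈ Set.Icc (0:ℝ) 1 → β t ≤ t * β 1 := by
    intro t ht
    obtain ⟨ht0, ht1⟩ := ht
    have h := hconv.2 (Set.mem_Icc.2 ⟨le_refl 0, zero_le_one⟩)
        (Set.mem_Icc.2 ⟨zero_le_one, le_refl 1⟩)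
        (show (0:ℝ) ≤ 1 - t by linarith) ht0 (by ring)
    simpa [hβ0] using h
  have hcsum : ∀ j, Summable (fun i => c i j) := fun j =>
    hu.inner_products_summable (X (v j))
  have hcle1 : ∀ j, ∑' i, c i j ≤ 1 := fun j =>
    le_trans (hu.tsum_inner_products_le (X (v j)))
      (by nlinarith [hXv j, norm_nonneg (X (v j))])
  have hβn_nonneg : ∀ i, 0 ≤ β (n i) := fun i => hβpos _ (hn i)
  have hjensen : ∀ j, β (m j) ≤ ∑' i, c i j * β (n i) := by
    intro j
    have h1 : m j = ∑' i, c i j * n i := by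
      rw [hm_eq j]; exact tsum_congr fun i => mul_comm _ _
    rw [h1]
    exact bk_jensen_tsum β hconv hβ0 hβpos (fun i => c i j) n
      (fun i => hc_nonneg i j) hn (hcsum j) (hcle1 j)
  have hRHS_nonneg : ∀ i, 0 ≤ β (n i) * ‖X (u i)‖ ^ 2 := fun i =>
    mul_nonneg (hβn_nonneg i) (sq_nonneg _)
  have hRHS_sum : Summable (fun i => β (n i) * ‖X (u i)‖ ^ 2) := by
    apply Summable.of_nonneg_of_le hRHS_nonneg (fun i => ?_) (hnsum.mul_right (β 1))
    calc β (n i) * ‖X (u i)‖ ^ 2 ≤ β (n i) * 1 :=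
          mul_le_mul_of_nonneg_left
            (by nlinarith [hXu i, norm_nonneg (X (u i))]) (hβn_nonneg i)
      _ = β (n i) := mul_one _
      _ ≤ n i * β 1 := hβle (n i) (hn i)
  have hmain : ∀ F : Finset ℕ, ∑ j ∈ F, β (m j) ≤ ∑' i, β (n i) * ‖X (u i)‖ ^ 2 := by
    intro F
    have hsum_i : ∀ j, Summable (fun i => c i j * β (n i)) := by
      intro j
      apply Summable.of_nonneg_of_le
        (fun i => mul_nonneg (hc_nonneg i j) (hβn_nonneg i))
        (fun i => ?_) ((hcsum j).mul_right (β 1))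
      have : β (n i) ≤ β 1 := by
        calc β (n i) ≤ n i * β 1 := hβle (n i) (hn i)
          _ ≤ 1 * β 1 := mul_le_mul_of_nonneg_right (hn i).2 hβ1
          _ = β 1 := one_mul _
      exact mul_le_mul_of_nonneg_left this (hc_nonneg i j)
    have hterm : ∀ i, ∑ j ∈ F, c i j * β (n i) ≤ β (n i) * ‖X (u i)‖ ^ 2 := by
      intro i
      have hb : ∑ j ∈ F, c i j ≤ ‖X (u i)‖ ^ 2 := by
        calc ∑ j ∈ F, c i j = ∑ j ∈ F, ‖⟪v j, X (u i)⟫_ℂ‖ ^ 2 :=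
              Finset.sum_congr rfl (fun j _ => hc_symm i j)
          _ ≤ ‖X (u i)‖ ^ 2 := hv.sum_inner_products_le (X (u i))
      calc ∑ j ∈ F, c i j * β (n i) = (∑ j ∈ F, c i j) * β (n i) :=
            (Finset.sum_mul ..).symm
        _ ≤ ‖X (u i)‖ ^ 2 * β (n i) := mul_le_mul_of_nonneg_right hb (hβn_nonneg i)
        _ = β (n i) * ‖X (u i)‖ ^ 2 := mul_comm _ _
    calc ∑ j ∈ F, β (m j) ≤ ∑ j ∈ F, ∑' i, c i j * β (n i) :=
          Finset.sum_le_sum (fun j _ => hjensen j)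
      _ = ∑' i, ∑ j ∈ F, c i j * β (n i) := (Summable.tsum_finsetSum (fun j _ => hsum_i j)).symm
      _ ≤ ∑' i, β (n i) * ‖X (u i)‖ ^ 2 := by
          apply Summable.tsum_le_tsum hterm _ hRHS_sum
          exact Summable.of_nonneg_of_le
            (fun i => Finset.sum_nonneg fun j _ =>
              mul_nonneg (hc_nonneg i j) (hβn_nonneg i)) hterm hRHS_sum
  exact tsum_le_of_sum_le' (tsum_nonneg hRHS_nonneg) hmain
end
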